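/- Let μ : ℝ → ℝ be twice differentiable, let x* ∈ ℝ, and set A := μ'(x*) > 0 and B := μ''(x*) < 0. Define g(x) = μ(x) for x ≤ x* and g(x) = μ(x*) + (A²/B)·ln(−A/B) − (A²/B)·ln(x − x* − A/B) for x > x*. Then g is twice differentiable at every point of ℝ, with second derivative g''(x) = μ''(x) for x ≤ x* and g''(x) = A² / ( B·(x − x* − A/B)² ) for x ≥ x*; in particular g''(x*) = μ''(x*) = B. -/

import Mathlib

/-- the upper log-extension g of μ beyond x* (with A = μ'(x*) > 0 and
B = μ''(x*) < 0) is twice differentiable everywhere, with g'' = μ'' on (-∞, x*] and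
g''(x) = A²/(B(x − x* − A/B)²) on [x*, ∞); in particular g''(x*) = B. -/
theorem stmt_8 (μ μ' μ'' : ℝ → ℝ)
    (hμd : ∀ x, HasDerivAt μ (μ' x) x)
    (hμd' : ∀ x, HasDerivAt μ' (μ'' x) x)
    (xs A B : ℝ) (hA : A = μ' xs) (hB : B = μ'' xs)
    (hApos : 0 < A) (hBneg : B < 0)
    (g : ℝ → ℝ)
    (hg : ∀ x, g x = if x ≤ xs then μ x
      else μ xs + (A^2 / B) * Real.log (-A / B)
        - (A^2 / B) * Real.log (x - xs - A / B)) :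
    ∃ g' g'' : ℝ → ℝ,
      (∀ x, HasDerivAt g (g' x) x) ∧
      (∀ x, HasDerivAt g' (g'' x) x) ∧
      (∀ x ≤ xs, g'' x = μ'' x) ∧
      (∀ x ≥ xs, g'' x = A^2 / (B * (x - xs - A / B)^2)) ∧
      g'' xs = B := by
  have hAne : A ≠ 0 := ne_of_gt hApos
  have hBne : B ≠ 0 := ne_of_lt hBneg
  set k : ℝ := xs + A / B with hk
  have hkxs : xs - k = -(A / B) := by rw [hk]; ring
  have hABpos : 0 < -(A / B) := by
    have : A / B < 0 := div_neg_of_pos_of_neg hApos hBneg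
    linarith
  have hxskpos : 0 < xs - k := by rw [hkxs]; exact hABpos
  have hpos : ∀ x, xs ≤ x → 0 < x - k := fun x hx => by linarith
  set C : ℝ := A ^ 2 / B with hC
  set h : ℝ → ℝ := fun x => μ xs + C * Real.log (-A / B) - C * Real.log (x - k) with hh
  have hval : -C / (xs - k) = A := by
    rw [hkxs, hC]; field_simp
  have hval2 : C / (xs - k) ^ 2 = B := by
    rw [hkxs, hC]; field_simp
  refine ⟨fun x => if x ≤ xs then μ' x else -C / (x - k),
          fun x => if x ≤ xs then μ'' x else C / (x - k) ^ 2, ?_, ?_, ?_, ?_, ?_⟩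
  · -- g differentiable with derivative g'
    have hhd : ∀ x, xs ≤ x → HasDerivAt h (-C / (x - k)) x := by
      intro x hx
      have hne : x - k ≠ 0 := ne_of_gt (hpos x hx)
      have hlog : HasDerivAt (fun y => Real.log (y - k)) (1 / (x - k)) x :=
        ((hasDerivAt_id x).sub_const k).log hne
      have := ((hasDerivAt_const x (μ xs + C * Real.log (-A / B))).sub
        (hlog.const_mul C))
      refine this.congr_deriv ?_
      ring
    have hgeq : ∀ x > xs, g x = h x := by
      intro x hx
      rw [hg x, if_neg (not_le.mpr hx), hh]
      simp only [hC]
      rw [hk]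
      ring_nf
    intro x
    rcases lt_trichotomy x xs with hx | hx | hx
    · simp only [if_pos hx.le]
      refine (hμd x).congr_of_eventuallyEq ?_
      filter_upwards [Iio_mem_nhds hx] with y hy
      rw [hg y, if_pos (le_of_lt hy)]
    · subst hx
      simp only [le_refl, if_true, ← hA]
      have hIic : HasDerivWithinAt g A (Set.Iic x) x := by
        rw [hA]
        refine ((hμd x).hasDerivWithinAt.congr (fun y hy => ?_) ?_)
        · rw [hg y, if_pos (Set.mem_Iic.mp hy)]
        · rw [hg x, if_pos le_rfl]
      have hIci : HasDerivWithinAt g A (Set.Ici x) x := by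
        have := (hhd x le_rfl).hasDerivWithinAt (s := Set.Ici x)
        rw [hval] at this
        refine this.congr ?_ ?_
        · intro y hy
          rcases eq_or_lt_of_le (Set.mem_Ici.mp hy) with hy' | hy'
          · rw [← hy', hg x, if_pos le_rfl, hh]
            simp only [hkxs, neg_div, Real.log_neg_eq_log]
            ring
          · exact hgeq y hy'
        · rw [hg x, if_pos le_rfl, hh]
          simp only [hkxs, neg_div, Real.log_neg_eq_log]
          ring
      have := hIic.union hIci
      rwa [Set.Iic_union_Ici, hasDerivWithinAt_univ] at this
    · simp only [if_neg (not_le.mpr hx)]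
      refine ((hhd x hx.le).congr_of_eventuallyEq ?_)
      filter_upwards [Ioi_mem_nhds hx] with y hy
      exact hgeq y hy
  · -- g' differentiable with derivative g''
    intro x
    have hh'd : ∀ x, xs ≤ x → HasDerivAt (fun y => -C / (y - k)) (C / (x - k) ^ 2) x := by
      intro x hx
      have hne : x - k ≠ 0 := ne_of_gt (hpos x hx)
      have hinv := (((hasDerivAt_id x).sub_const k).inv hne).const_mul (-C)
      simp only [div_eq_mul_inv]
      refine hinv.congr_deriv ?_
      simp only [id]
      ring
    rcases lt_trichotomy x xs with hx | hx | hx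
    · simp only [if_pos hx.le]
      refine (hμd' x).congr_of_eventuallyEq ?_
      filter_upwards [Iio_mem_nhds hx] with y hy
      simp only [if_pos (Set.mem_Iio.mp hy).le]
    · subst hx
      simp only [le_refl, if_true, ← hB]
      have hIic : HasDerivWithinAt (fun y => if y ≤ x then μ' y else -C / (y - k))
          (μ'' x) (Set.Iic x) x := by
        refine ((hμd' x).hasDerivWithinAt.congr (fun y hy => ?_) ?_)
        · rw [if_pos (Set.mem_Iic.mp hy)]
        · rw [if_pos le_rfl]
      have hIci : HasDerivWithinAt (fun y => if y ≤ x then μ' y else -C / (y - k))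
          (μ'' x) (Set.Ici x) x := by
        have := (hh'd x le_rfl).hasDerivWithinAt (s := Set.Ici x)
        rw [hval2, hB] at this
        refine this.congr ?_ ?_
        · intro y hy
          rcases eq_or_lt_of_le (Set.mem_Ici.mp hy) with hy' | hy'
          · rw [← hy', if_pos le_rfl, ← hA, ← hval]
          · rw [if_neg (not_le.mpr hy')]
        · rw [if_pos le_rfl, ← hA, ← hval]
      have := hIic.union hIci
      rw [Set.Iic_union_Ici, hasDerivWithinAt_univ] at this
      rwa [hB]
    · simp only [if_neg (not_le.mpr hx)]
      refine ((hh'd x hx.le).congr_of_eventuallyEq ?_)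
      filter_upwards [Ioi_mem_nhds hx] with y hy
      simp only [if_neg (not_le.mpr (Set.mem_Ioi.mp hy))]
  · intro x hx; simp only [if_pos hx]
  · intro x hx
    rcases eq_or_lt_of_le hx with hx' | hx'
    · rw [← hx']
      simp only [le_refl, if_true]
      rw [← hB]
      have h1 : xs - xs - A / B = -(A / B) := by ring
      rw [h1]
      field_simp
    · simp only [if_neg (not_le.mpr hx'),
        show x - xs - A / B = x - k by rw [hk]; ring]
      rw [hC, div_div]
  · simp only [le_refl, if_true]
    exact hB.symm
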